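/- For all x, y ∈ ℂ with |x| < 1, the summation formula holds: Φ₁(a, b; c; q; x, y) = ∑_{n=0}^∞ ((a;q)_n (b;q)_n / ((c;q)_n (q;q)_n)) x^n · ∑_{k=0}^∞ ((a q^n;q)_k / ((c q^n;q)_k (q;q)_k)) y^k; that is, Φ₁ equals the series in x whose n-th coefficient is the basic hypergeometric series ₂Φ₁(a q^n, 0; c q^n; q, y). -/

import Mathlib

open scoped BigOperators

noncomputable section

/-- The q-shifted factorial `(a;q)_n = ∏_{r=0}^{n-1} (1 - a q^r)`. -/
def qPoch (q a : ℂ) (n : ℕ) : ℂ := ∏ r ∈ Finset.range n, (1 - a * q ^ r)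

/-- The basic Humbert function `Φ₁(a,b;c;q;x,y)` as a double series over `ℕ × ℕ`. -/
def Phi1 (q a b c x y : ℂ) : ℂ :=
  ∑' p : ℕ × ℕ,
    qPoch q a (p.1 + p.2) * qPoch q b p.1 * x ^ p.1 * y ^ p.2 /
      (qPoch q c (p.1 + p.2) * qPoch q q p.1 * qPoch q q p.2)

/-- The basic Humbert function `Φ₂(a,b;c;q;x,y)` as a double series over `ℕ × ℕ`. -/
def Phi2 (q a b c x y : ℂ) : ℂ :=
  ∑' p : ℕ × ℕ,
    qPoch q a p.1 * qPoch q b p.2 * x ^ p.1 * y ^ p.2 /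
      (qPoch q c (p.1 + p.2) * qPoch q q p.1 * qPoch q q p.2)

/-- The basic Humbert function `Φ₃(a;b;q;x,y)` as a double series over `ℕ × ℕ`. -/
def Phi3 (q a b x y : ℂ) : ℂ :=
  ∑' p : ℕ × ℕ,
    qPoch q a p.1 * x ^ p.1 * y ^ p.2 /
      (qPoch q b (p.1 + p.2) * qPoch q q p.1 * qPoch q q p.2)

/-- The one-variable q-difference operator. -/
def qDiff (q : ℂ) (f : ℂ → ℂ) : ℂ → ℂ := fun x => (f x - f (q * x)) / ((1 - q) * x)

/-- The q-difference operator in the first variable of a two-variable function. -/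
def qDx (q : ℂ) (f : ℂ → ℂ → ℂ) : ℂ → ℂ → ℂ :=
  fun x y => (f x y - f (q * x) y) / ((1 - q) * x)

/-- The q-difference operator in the second variable of a two-variable function. -/
def qDy (q : ℂ) (f : ℂ → ℂ → ℂ) : ℂ → ℂ → ℂ :=
  fun x y => (f x y - f x (q * y)) / ((1 - q) * y)

/-- The infinite q-shifted factorial `(a;q)_∞ = ∏_{r=0}^∞ (1 - a q^r)`. -/
def qPochInf (q a : ℂ) : ℂ := ∏' r : ℕ, (1 - a * q ^ r)

lemma abs_qPoch (q a : ℂ) (m : ℕ) :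
    ‖qPoch q a m‖ = ∏ r ∈ Finset.range m, ‖1 - a * q ^ r‖ := by
  simpa [qPoch] using norm_prod (Finset.range m) (fun r => 1 - a * q ^ r)

lemma geom_partial_le (q : ℂ) (hq1 : ‖q‖ < 1) (m : ℕ) :
    ∑ r ∈ Finset.range m, ‖q‖ ^ r ≤ (1 - ‖q‖)⁻¹ := by
  have hq0 : (0:ℝ) ≤ ‖q‖ := norm_nonneg q
  have h := Summable.sum_le_tsum (Finset.range m) (fun i _ => pow_nonneg hq0 i)
    (summable_geometric_of_lt_one hq0 hq1)
  rwa [tsum_geometric_of_lt_one hq0 hq1] at h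

lemma qPoch_abs_le (q a : ℂ) (hq1 : ‖q‖ < 1) (m : ℕ) :
    ‖qPoch q a m‖ ≤ Real.exp (‖a‖ * (1 - ‖q‖)⁻¹) := by
  have hq0 : (0:ℝ) ≤ ‖q‖ := norm_nonneg q
  rw [abs_qPoch]
  calc ∏ r ∈ Finset.range m, ‖1 - a * q ^ r‖
      ≤ ∏ r ∈ Finset.range m, Real.exp (‖a‖ * ‖q‖ ^ r) := by
        apply Finset.prod_le_prod (fun r _ => norm_nonneg _)
        intro r _
        have h1 : ‖1 - a * q ^ r‖ ≤ 1 + ‖a‖ * ‖q‖ ^ r := by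
          have := norm_sub_le (1:ℂ) (a * q ^ r)
          simpa [norm_mul, norm_pow] using this
        have h2 := Real.add_one_le_exp (‖a‖ * ‖q‖ ^ r)
        linarith
    _ = Real.exp (∑ r ∈ Finset.range m, ‖a‖ * ‖q‖ ^ r) :=
        (Real.exp_sum _ _).symm
    _ ≤ Real.exp (‖a‖ * (1 - ‖q‖)⁻¹) := by
        apply Real.exp_le_exp.mpr
        rw [← Finset.mul_sum]
        exact mul_le_mul_of_nonneg_left (geom_partial_le q hq1 m) (norm_nonneg a)

lemma exp_neg_le_one_sub {t : ℝ} (h0 : 0 ≤ t) (h2 : t ≤ 1/2) :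
    Real.exp (-(2*t)) ≤ 1 - t := by
  have h1 : (1:ℝ) + 2*t ≤ Real.exp (2*t) := by
    have := Real.add_one_le_exp (2*t); linarith
  have e1 : Real.exp (-(2*t)) * (1 + 2*t) ≤ Real.exp (-(2*t)) * Real.exp (2*t) :=
    mul_le_mul_of_nonneg_left h1 (Real.exp_nonneg _)
  rw [← Real.exp_add, neg_add_cancel, Real.exp_zero] at e1
  nlinarith [Real.exp_pos (-(2*t))]

lemma exists_qPoch_lb (q a : ℂ) (hq1 : ‖q‖ < 1)
    (h : ∀ r : ℕ, 1 - a * q ^ r ≠ 0) :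
    ∃ δ : ℝ, 0 < δ ∧ ∀ m, δ ≤ ‖qPoch q a m‖ := by
  have hq0 : (0:ℝ) ≤ ‖q‖ := norm_nonneg q
  have ha0 : (0:ℝ) ≤ ‖a‖ := norm_nonneg a
  -- choose N with |a| * |q|^N ≤ 1/2
  obtain ⟨N, hN⟩ : ∃ N : ℕ, ‖a‖ * ‖q‖ ^ N ≤ 1/2 := by
    have h0 : Filter.Tendsto (fun n : ℕ => ‖a‖ * ‖q‖ ^ n)
        Filter.atTop (nhds 0) := by
      simpa using (tendsto_pow_atTop_nhds_zero_of_lt_one hq0 hq1).const_mul (‖a‖)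
    have := (h0.eventually (ge_mem_nhds (show (0:ℝ) < 1/2 by norm_num))).exists
    simpa using this
  set g : ℕ → ℝ := fun r => min (‖1 - a * q ^ r‖) 1 with hg
  have hgpos : ∀ r, 0 < g r := fun r =>
    lt_min (norm_pos_iff.mpr (h r)) one_pos
  have hgle1 : ∀ r, g r ≤ 1 := fun r => min_le_right _ _
  have hgle : ∀ r, g r ≤ ‖1 - a * q ^ r‖ := fun r => min_le_left _ _
  set E : ℝ := Real.exp (-(2 * (‖a‖ * (1 - ‖q‖)⁻¹))) with hE
  refine ⟨(∏ r ∈ Finset.range N, g r) * E, mul_pos (Finset.prod_pos fun r _ => hgpos r)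
    (Real.exp_pos _), fun m => ?_⟩
  have hE1 : E ≤ 1 := by
    rw [hE, Real.exp_le_one_iff]
    have : (0:ℝ) ≤ (1 - ‖q‖)⁻¹ := inv_nonneg.mpr (by linarith)
    nlinarith
  rcases le_or_gt m N with hmN | hNm
  · -- m ≤ N
    have h1 : (∏ r ∈ Finset.range N, g r) ≤ ∏ r ∈ Finset.range m, g r := by
      rw [show N = m + (N - m) from (Nat.add_sub_cancel' hmN).symm, Finset.prod_range_add]
      have hb : (∏ i ∈ Finset.range (N - m), g (m + i)) ≤ 1 :=
        Finset.prod_le_one (fun i _ => (hgpos _).le) (fun i _ => hgle1 _)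
      have ha' : (0:ℝ) ≤ ∏ r ∈ Finset.range m, g r :=
        Finset.prod_nonneg fun r _ => (hgpos r).le
      nlinarith [Finset.prod_nonneg (fun i (_ : i ∈ Finset.range (N - m)) => (hgpos (m + i)).le)]
    have h2 : (∏ r ∈ Finset.range m, g r) ≤ ‖qPoch q a m‖ := by
      rw [abs_qPoch]
      exact Finset.prod_le_prod (fun r _ => (hgpos r).le) (fun r _ => hgle r)
    calc (∏ r ∈ Finset.range N, g r) * E ≤ (∏ r ∈ Finset.range N, g r) * 1 :=
          mul_le_mul_of_nonneg_left hE1 (Finset.prod_nonneg fun r _ => (hgpos r).le)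
      _ = ∏ r ∈ Finset.range N, g r := mul_one _
      _ ≤ ∏ r ∈ Finset.range m, g r := h1
      _ ≤ _ := h2
  · -- N < m
    have hm : m = N + (m - N) := (Nat.add_sub_cancel' hNm.le).symm
    rw [abs_qPoch, hm, Finset.prod_range_add]
    have hA : (∏ r ∈ Finset.range N, g r) ≤ ∏ r ∈ Finset.range N, ‖1 - a * q ^ r‖ :=
      Finset.prod_le_prod (fun r _ => (hgpos r).le) (fun r _ => hgle r)
    have hB : E ≤ ∏ i ∈ Finset.range (m - N), ‖1 - a * q ^ (N + i)‖ := by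
      have hterm : ∀ i, Real.exp (-(2 * (‖a‖ * ‖q‖ ^ (N + i)))) ≤
          ‖1 - a * q ^ (N + i)‖ := by
        intro i
        set t : ℝ := ‖a‖ * ‖q‖ ^ (N + i) with ht
        have ht0 : 0 ≤ t := mul_nonneg ha0 (pow_nonneg hq0 _)
        have ht2 : t ≤ 1/2 := by
          have : ‖q‖ ^ (N + i) ≤ ‖q‖ ^ N :=
            pow_le_pow_of_le_one hq0 hq1.le (Nat.le_add_right N i)
          have := mul_le_mul_of_nonneg_left this ha0
          linarith
        have h3 : 1 - t ≤ ‖1 - a * q ^ (N + i)‖ := by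
          have := norm_sub_norm_le (1:ℂ) (a * q ^ (N + i))
          simpa [norm_mul, norm_pow, ht] using this
        exact (exp_neg_le_one_sub ht0 ht2).trans h3
      calc E ≤ Real.exp (∑ i ∈ Finset.range (m - N),
            (-(2 * (‖a‖ * ‖q‖ ^ (N + i))))) := by
            apply Real.exp_le_exp.mpr
            have hsum : ∑ i ∈ Finset.range (m - N),
                ‖a‖ * ‖q‖ ^ (N + i) ≤
                ‖a‖ * (1 - ‖q‖)⁻¹ := by
              calc ∑ i ∈ Finset.range (m - N), ‖a‖ * ‖q‖ ^ (N + i)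
                  ≤ ∑ i ∈ Finset.range (m - N), ‖a‖ * ‖q‖ ^ i :=
                    Finset.sum_le_sum fun i _ => mul_le_mul_of_nonneg_left
                      (pow_le_pow_of_le_one hq0 hq1.le (Nat.le_add_left i N)) ha0
                _ = ‖a‖ * ∑ i ∈ Finset.range (m - N), ‖q‖ ^ i :=
                    (Finset.mul_sum _ _ _).symm
                _ ≤ _ := mul_le_mul_of_nonneg_left (geom_partial_le q hq1 _) ha0
            have heq : ∑ i ∈ Finset.range (m - N),
                (-(2 * (‖a‖ * ‖q‖ ^ (N + i)))) =
                -(2 * ∑ i ∈ Finset.range (m - N),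
                  ‖a‖ * ‖q‖ ^ (N + i)) := by
              rw [Finset.mul_sum]
              simp
            rw [heq]
            linarith
        _ = ∏ i ∈ Finset.range (m - N),
              Real.exp (-(2 * (‖a‖ * ‖q‖ ^ (N + i)))) := Real.exp_sum _ _
        _ ≤ _ := Finset.prod_le_prod (fun i _ => (Real.exp_pos _).le) (fun i _ => hterm i)
    calc (∏ r ∈ Finset.range N, g r) * E
        ≤ (∏ r ∈ Finset.range N, ‖1 - a * q ^ r‖) *
          ∏ i ∈ Finset.range (m - N), ‖1 - a * q ^ (N + i)‖ :=
          mul_le_mul hA hB (Real.exp_pos _).le (Finset.prod_nonneg fun r _ => norm_nonneg _)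
      _ = _ := rfl

lemma qPoch_add (q a : ℂ) (n k : ℕ) :
    qPoch q a (n + k) = qPoch q a n * qPoch q (a * q ^ n) k := by
  rw [qPoch, qPoch, qPoch, Finset.prod_range_add]
  exact congrArg _ (Finset.prod_congr rfl fun r _ => by rw [pow_add]; ring)

theorem phi1_summation' (q a b c : ℂ) (hq0 : 0 < ‖q‖) (hq1 : ‖q‖ < 1)
    (hc : ∀ m : ℕ, c ≠ q ^ (-(m : ℤ))) (x y : ℂ) (hx : ‖x‖ < 1) :
    (∑' p : ℕ × ℕ,
      qPoch q a (p.1 + p.2) * qPoch q b p.1 * x ^ p.1 * y ^ p.2 /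
        (qPoch q c (p.1 + p.2) * qPoch q q p.1 * qPoch q q p.2)) =
      ∑' n : ℕ,
        qPoch q a n * qPoch q b n / (qPoch q c n * qPoch q q n) * x ^ n *
          ∑' k : ℕ, qPoch q (a * q ^ n) k * y ^ k / (qPoch q (c * q ^ n) k * qPoch q q k) := by
  have hqne : q ≠ 0 := by
    intro h; rw [h] at hq0; simp at hq0
  have hc' : ∀ s : ℕ, 1 - c * q ^ s ≠ 0 := by
    intro s h
    apply hc s
    have h1 : c * q ^ s = 1 := by linear_combination -h
    have h2 : c = (q ^ s)⁻¹ := eq_inv_of_mul_eq_one_left h1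
    rw [h2, zpow_neg, zpow_natCast]
  have hqq : ∀ s : ℕ, 1 - q * q ^ s ≠ 0 := by
    intro s h
    have h1 : q ^ (s + 1) = 1 := by rw [pow_succ]; linear_combination -h
    have h2 := congrArg norm h1
    rw [norm_pow, norm_one] at h2
    have h3 : ‖q‖ ^ (s + 1) < 1 :=
      pow_lt_one₀ (norm_nonneg q) hq1 (Nat.succ_ne_zero s)
    rw [h2] at h3; exact lt_irrefl _ h3
  set T : ℕ × ℕ → ℂ := fun p =>
    qPoch q a (p.1 + p.2) * qPoch q b p.1 * x ^ p.1 * y ^ p.2 /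
      (qPoch q c (p.1 + p.2) * qPoch q q p.1 * qPoch q q p.2) with hT
  set G : ℕ → ℕ → ℂ := fun n k =>
    qPoch q (a * q ^ n) k * y ^ k / (qPoch q (c * q ^ n) k * qPoch q q k) with hG
  have hfact : ∀ p : ℕ × ℕ, T p =
      (qPoch q a p.1 * qPoch q b p.1 / (qPoch q c p.1 * qPoch q q p.1) * x ^ p.1) *
        G p.1 p.2 := by
    intro p
    simp only [hT, hG]
    rw [qPoch_add q a, qPoch_add q c]
    ring
  by_cases hsum : Summable T
  · rw [Summable.tsum_prod hsum]
    refine tsum_congr fun n => ?_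
    calc (∑' k, T (n, k)) = ∑' k,
          (qPoch q a n * qPoch q b n / (qPoch q c n * qPoch q q n) * x ^ n) * G n k :=
          tsum_congr fun k => hfact (n, k)
      _ = _ := tsum_mul_left
  · rw [tsum_eq_zero_of_not_summable hsum]
    by_cases ha : ∀ s : ℕ, 1 - a * q ^ s ≠ 0
    · by_cases hy : ‖y‖ < 1
      · -- |y| < 1 : the double series is summable, contradiction
        exfalso
        apply hsum
        obtain ⟨δc, hδc, hδcm⟩ := exists_qPoch_lb q c hq1 hc'
        obtain ⟨δq, hδq, hδqm⟩ := exists_qPoch_lb q q hq1 hqq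
        set Ca := Real.exp (‖a‖ * (1 - ‖q‖)⁻¹) with hCa
        set Cb := Real.exp (‖b‖ * (1 - ‖q‖)⁻¹) with hCb
        apply Summable.of_norm_bounded
          (g := fun p : ℕ × ℕ => Ca * Cb / (δc * δq * δq) *
            (‖x‖ ^ p.1 * ‖y‖ ^ p.2))
        · apply Summable.mul_left
          apply summable_mul_of_summable_norm
            (f := fun n : ℕ => ‖x‖ ^ n) (g := fun k : ℕ => ‖y‖ ^ k)
          · have he : (fun n : ℕ => ‖‖x‖ ^ n‖) = fun n => ‖x‖ ^ n :=
              funext fun n => Real.norm_of_nonneg (pow_nonneg (norm_nonneg x) n)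
            rw [he]
            exact summable_geometric_of_lt_one (norm_nonneg x) hx
          · have he : (fun k : ℕ => ‖‖y‖ ^ k‖) = fun k => ‖y‖ ^ k :=
              funext fun k => Real.norm_of_nonneg (pow_nonneg (norm_nonneg y) k)
            rw [he]
            exact summable_geometric_of_lt_one (norm_nonneg y) hy
        · intro p
          have hZ : (0:ℝ) ≤ ‖x‖ ^ p.1 * ‖y‖ ^ p.2 := by positivity
          simp only [hT, norm_div, norm_mul, norm_pow]
          have hnum : ‖qPoch q a (p.1 + p.2)‖ * ‖qPoch q b p.1‖ *
              ‖x‖ ^ p.1 * ‖y‖ ^ p.2 ≤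
              Ca * Cb * (‖x‖ ^ p.1 * ‖y‖ ^ p.2) := by
            have h1 := mul_le_mul (qPoch_abs_le q a hq1 (p.1 + p.2)) (qPoch_abs_le q b hq1 p.1)
              (norm_nonneg _) (Real.exp_nonneg _)
            calc ‖qPoch q a (p.1 + p.2)‖ * ‖qPoch q b p.1‖ *
                ‖x‖ ^ p.1 * ‖y‖ ^ p.2
                = (‖qPoch q a (p.1 + p.2)‖ * ‖qPoch q b p.1‖) *
                  (‖x‖ ^ p.1 * ‖y‖ ^ p.2) := by ring
              _ ≤ Ca * Cb * (‖x‖ ^ p.1 * ‖y‖ ^ p.2) :=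
                  mul_le_mul_of_nonneg_right h1 hZ
          have hden : δc * δq * δq ≤ ‖qPoch q c (p.1 + p.2)‖ *
              ‖qPoch q q p.1‖ * ‖qPoch q q p.2‖ :=
            mul_le_mul (mul_le_mul (hδcm _) (hδqm _) hδq.le (norm_nonneg _))
              (hδqm _) hδq.le (mul_nonneg (norm_nonneg _) (norm_nonneg _))
          rw [div_mul_eq_mul_div]
          exact div_le_div₀ (by positivity) hnum (by positivity) hden
      · -- |y| ≥ 1 and (a;q)_m never vanishes: each inner series diverges
        push_neg at hy
        have hGns : ∀ n : ℕ, ¬ Summable (G n) := by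
          intro n hSn
          obtain ⟨δa, hδa, hδam⟩ := exists_qPoch_lb q (a * q ^ n) hq1 (fun r => by
            rw [mul_assoc, ← pow_add]; exact ha (n + r))
          set Cc := Real.exp (‖c * q ^ n‖ * (1 - ‖q‖)⁻¹) with hCc
          set Cq := Real.exp (‖q‖ * (1 - ‖q‖)⁻¹) with hCq
          have hε : (0:ℝ) < δa / (Cc * Cq) := by positivity
          have hεle : ∀ k : ℕ, δa / (Cc * Cq) ≤ ‖G n k‖ := by
            intro k
            have hden_ne1 : qPoch q (c * q ^ n) k ≠ 0 := by
              rw [qPoch]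
              apply Finset.prod_ne_zero_iff.mpr
              intro r _
              rw [mul_assoc, ← pow_add]
              exact hc' (n + r)
            have hden_ne2 : qPoch q q k ≠ 0 := by
              rw [qPoch]
              exact Finset.prod_ne_zero_iff.mpr fun r _ => hqq r
            simp only [hG, norm_div, norm_mul, norm_pow]
            have hnum : δa ≤ ‖qPoch q (a * q ^ n) k‖ * ‖y‖ ^ k := by
              have h1 : (1:ℝ) ≤ ‖y‖ ^ k := one_le_pow₀ hy
              calc δa = δa * 1 := (mul_one _).symm
                _ ≤ _ := mul_le_mul (hδam k) h1 zero_le_one (norm_nonneg _)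
            have hden_le : ‖qPoch q (c * q ^ n) k‖ * ‖qPoch q q k‖ ≤
                Cc * Cq :=
              mul_le_mul (qPoch_abs_le q (c * q ^ n) hq1 k) (qPoch_abs_le q q hq1 k)
                (norm_nonneg _) (Real.exp_nonneg _)
            have hden_pos : 0 < ‖qPoch q (c * q ^ n) k‖ *
                ‖qPoch q q k‖ :=
              mul_pos (norm_pos_iff.mpr hden_ne1) (norm_pos_iff.mpr hden_ne2)
            exact div_le_div₀ (mul_nonneg (norm_nonneg _)
              (pow_nonneg (norm_nonneg y) k)) hnum hden_pos hden_le
          have h0 := hSn.tendsto_atTop_zero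
          obtain ⟨k, hk⟩ := (h0.eventually (Metric.ball_mem_nhds 0 hε)).exists
          rw [dist_zero_right] at hk
          exact absurd hk (not_lt.mpr (hεle k))
        symm
        calc (∑' n : ℕ, qPoch q a n * qPoch q b n / (qPoch q c n * qPoch q q n) * x ^ n *
              ∑' k : ℕ, G n k)
            = ∑' n : ℕ, (0:ℂ) := tsum_congr fun n => by
              rw [tsum_eq_zero_of_not_summable (hGns n), mul_zero]
          _ = 0 := tsum_zero
    · -- a = q^{-s} for some s : the double series has finite support, contradiction
      push_neg at ha
      obtain ⟨s, hs⟩ := ha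
      exfalso
      apply hsum
      apply summable_of_ne_finset_zero (s := Finset.range (s + 1) ×ˢ Finset.range (s + 1))
      intro p hp
      have hps : s < p.1 + p.2 := by
        rw [Finset.mem_product, Finset.mem_range, Finset.mem_range] at hp
        omega
      have hz : qPoch q a (p.1 + p.2) = 0 :=
        Finset.prod_eq_zero (Finset.mem_range.mpr hps) hs
      simp only [hT, hz, zero_mul, zero_div]

/-- summation formula expressing Φ₁ as a series whose n-th coefficient is
`₂Φ₁(a q^n, 0; c q^n; q, y)`. -/
theorem phi1_summation (q a b c : ℂ) (hq0 : 0 < ‖q‖) (hq1 : ‖q‖ < 1)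
    (hc : ∀ m : ℕ, c ≠ q ^ (-(m : ℤ))) (x y : ℂ) (hx : ‖x‖ < 1) :
    Phi1 q a b c x y =
      ∑' n : ℕ,
        qPoch q a n * qPoch q b n / (qPoch q c n * qPoch q q n) * x ^ n *
          ∑' k : ℕ, qPoch q (a * q ^ n) k * y ^ k / (qPoch q (c * q ^ n) k * qPoch q q k) := by
  rw [Phi1]
  exact phi1_summation' q a b c hq0 hq1 hc x y hx
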